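/- Let (r_ℓ)_{ℓ≥1} be a sequence of positive real numbers with r_ℓ → ∞ and r_ℓ/ℓ → 0 as ℓ → ∞. For integers ℓ ≥ 1 and m ≥ 0 with m ≤ ℓ and ℓ + m even, define c_{ℓ,m} := |m² − 1/2 − ℓ(ℓ+1)|^{1/4} · √((2ℓ+1)/(4π) · (ℓ−m)!/(ℓ+m)!) · (2^m/√π) · Γ((ℓ+m+1)/2)/Γ((ℓ−m+2)/2). Then there exist C > 0 and L ≥ 1 such that for all integers ℓ ≥ L and all integers m with ℓ + m even satisfying either ℓ − 2r_ℓ ≤ m ≤ ℓ − r_ℓ or r_ℓ ≤ m ≤ 2r_ℓ, one has C ℓ ≤ c_{ℓ,m}² ≤ C^{−1} ℓ. -/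

import Mathlib

open Real Filter

/-- The normalization constant in the WKB approximation of the associated Legendre
function (even parity case). -/
noncomputable def clm (ℓ m : ℕ) : ℝ :=
  |(m : ℝ) ^ 2 - 1 / 2 - (ℓ : ℝ) * ((ℓ : ℝ) + 1)| ^ ((1:ℝ) / 4) *
    Real.sqrt ((2 * (ℓ : ℝ) + 1) / (4 * π) *
      ((Nat.factorial (ℓ - m) : ℝ) / (Nat.factorial (ℓ + m) : ℝ))) *
    (2 ^ m / Real.sqrt π) *
    Real.Gamma (((ℓ : ℝ) + (m : ℝ) + 1) / 2) / Real.Gamma (((ℓ : ℝ) - (m : ℝ) + 2) / 2)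

set_option maxHeartbeats 1000000

noncomputable def fS (n : ℕ) : ℝ :=
  (Nat.factorial (2 * n) : ℝ) / ((Nat.factorial n : ℝ) ^ 2 * 4 ^ n)

lemma fS_pos (n : ℕ) : 0 < fS n := by
  unfold fS; positivity

lemma fS_mul_sqrt (n : ℕ) (hn : 1 ≤ n) :
    fS n * Real.sqrt n = Stirling.stirlingSeq (2 * n) / Stirling.stirlingSeq n ^ 2 := by
  have hn0 : (0:ℝ) < n := by exact_mod_cast hn
  have he : (0:ℝ) < Real.exp 1 := Real.exp_pos 1
  have hs : (0:ℝ) < Real.sqrt n := Real.sqrt_pos.mpr hn0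
  have hB : (0:ℝ) < (Nat.factorial n : ℝ) := by positivity
  have hsq : Real.sqrt n ^ 2 = (n:ℝ) := Real.sq_sqrt hn0.le
  have h2 : Real.sqrt (2 * ((2*n : ℕ):ℝ)) = 2 * Real.sqrt n := by
    push_cast
    rw [show (2:ℝ) * (2 * (n:ℝ)) = 4 * n by ring, Real.sqrt_mul (by norm_num) (n:ℝ),
      show (4:ℝ) = 2^2 by norm_num, Real.sqrt_sq (by norm_num)]
  have h3 : (((2*n : ℕ):ℝ) / Real.exp 1) ^ (2*n) = 4 ^ n * (((n:ℝ) / Real.exp 1) ^ n) ^ 2 := by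
    push_cast
    rw [mul_div_assoc, mul_pow, ← pow_mul, mul_comm n 2, pow_mul]
    norm_num
  unfold Stirling.stirlingSeq fS
  rw [h2, h3]
  set P := ((n:ℝ)/Real.exp 1)^n with hPdef
  have hP0 : 0 < P := by rw [hPdef]; positivity
  have hS2 : Real.sqrt (2*(n:ℝ)) ^ 2 = 2*(n:ℝ) := Real.sq_sqrt (by positivity)
  rw [div_pow, mul_pow, hS2]
  field_simp
  ring_nf
  rw [hsq]

lemma Gamma_half (n : ℕ) :
    Real.Gamma ((n:ℝ) + 1/2) = Real.sqrt π * (Nat.factorial (2*n) : ℝ) / (4 ^ n * (Nat.factorial n : ℝ)) := by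
  induction n with
  | zero =>
    rw [show ((0:ℕ):ℝ) + 1/2 = 1/2 by norm_num, Real.Gamma_one_half_eq]
    simp
  | succ n ih =>
    have h1 : ((n+1:ℕ):ℝ) + 1/2 = ((n:ℝ) + 1/2) + 1 := by push_cast; ring
    rw [h1, Real.Gamma_add_one (by positivity), ih]
    have h2 : 2*(n+1) = (2*n+1) + 1 := by ring
    rw [h2, Nat.factorial_succ, Nat.factorial_succ, Nat.factorial_succ]
    push_cast
    have hf : ((Nat.factorial n : ℝ)) ≠ 0 := by positivity
    have h4 : ((4:ℝ)) ^ n ≠ 0 := by positivity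
    field_simp
    ring

lemma exists_fS_bounds : ∃ N : ℕ, 1 ≤ N ∧ ∀ n, N ≤ n →
    1/(2*Real.sqrt π) ≤ fS n * Real.sqrt n ∧ fS n * Real.sqrt n ≤ 2/Real.sqrt π := by
  have hsp : (0:ℝ) < Real.sqrt π := Real.sqrt_pos.mpr Real.pi_pos
  have h2n : Tendsto (fun n : ℕ => 2*n) atTop atTop :=
    tendsto_atTop_mono (fun n => by simp only [id_eq]; omega) tendsto_id
  have h1 : Tendsto (fun n : ℕ => Stirling.stirlingSeq (2*n)) atTop (nhds (Real.sqrt π)) :=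
    Stirling.tendsto_stirlingSeq_sqrt_pi.comp h2n
  have h2 : Tendsto (fun n : ℕ => Stirling.stirlingSeq n ^ 2) atTop (nhds (Real.sqrt π ^ 2)) :=
    Stirling.tendsto_stirlingSeq_sqrt_pi.pow 2
  have h3 : Tendsto (fun n : ℕ => Stirling.stirlingSeq (2*n) / Stirling.stirlingSeq n ^ 2)
      atTop (nhds (1/Real.sqrt π)) := by
    have := h1.div h2 (by positivity)
    convert this using 2
    · rfl
    rw [Real.sq_sqrt Real.pi_pos.le]
    rw [eq_div_iff Real.pi_ne_zero, div_mul_eq_mul_div, one_mul, Real.div_sqrt]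
  have h4 : Tendsto (fun n : ℕ => fS n * Real.sqrt n) atTop (nhds (1/Real.sqrt π)) := by
    apply h3.congr'
    filter_upwards [eventually_ge_atTop 1] with n hn
    exact (fS_mul_sqrt n hn).symm
  have hlow : ∀ᶠ n : ℕ in atTop, 1/(2*Real.sqrt π) < fS n * Real.sqrt n :=
    h4.eventually (eventually_gt_nhds (by rw [div_lt_div_iff₀ (by positivity) hsp]; nlinarith))
  have hup : ∀ᶠ n : ℕ in atTop, fS n * Real.sqrt n < 2/Real.sqrt π :=
    h4.eventually (eventually_lt_nhds (by rw [div_lt_div_iff₀ hsp hsp]; nlinarith))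
  obtain ⟨N, hN⟩ := (hlow.and hup).exists_forall_of_atTop
  exact ⟨max N 1, le_max_right _ _, fun n hn =>
    ⟨(hN n (le_trans (le_max_left _ _) hn)).1.le, (hN n (le_trans (le_max_left _ _) hn)).2.le⟩⟩

lemma clm_sq (ℓ m a b : ℕ) (hl : ℓ = a + b) (hm : m + b = a) :
    clm ℓ m ^ 2 = Real.sqrt (4*(a:ℝ)*(b:ℝ) + (ℓ:ℝ) + 1/2) * ((2*(ℓ:ℝ)+1)/(4*π)) * fS a * fS b := by
  have hmr : (m:ℝ) = (a:ℝ) - (b:ℝ) := by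
    have : ((m + b : ℕ):ℝ) = (a:ℝ) := by exact_mod_cast congrArg (Nat.cast (R := ℝ)) hm
    push_cast at this; linarith
  have hlr : (ℓ:ℝ) = (a:ℝ) + (b:ℝ) := by rw [hl]; push_cast; ring
  set X : ℝ := 4*(a:ℝ)*(b:ℝ) + (ℓ:ℝ) + 1/2 with hXdef
  have hX : 0 < X := by rw [hXdef]; positivity
  have habs : |(m:ℝ)^2 - 1/2 - (ℓ:ℝ)*((ℓ:ℝ)+1)| = X := by
    have h : (m:ℝ)^2 - 1/2 - (ℓ:ℝ)*((ℓ:ℝ)+1) = -X := by rw [hXdef, hmr, hlr]; ring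
    rw [h, abs_neg, abs_of_pos hX]
  have hrpow : (X ^ ((1:ℝ)/4)) ^ (2:ℕ) = Real.sqrt X := by
    rw [← Real.rpow_natCast (X ^ ((1:ℝ)/4)) 2, ← Real.rpow_mul hX.le]
    rw [Real.sqrt_eq_rpow]
    norm_num
  have hL1 : ((ℓ:ℝ) + (m:ℝ) + 1)/2 = (a:ℝ) + 1/2 := by rw [hmr, hlr]; ring
  have hL2 : ((ℓ:ℝ) - (m:ℝ) + 2)/2 = (b:ℝ) + 1 := by rw [hmr, hlr]; ring
  have hsub : ℓ - m = 2*b := by omega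
  have hadd : ℓ + m = 2*a := by omega
  have hY : (0:ℝ) ≤ (2 * (ℓ:ℝ) + 1) / (4 * π) * ((Nat.factorial (2*b) : ℝ) / (Nat.factorial (2*a) : ℝ)) := by
    positivity
  have ht : ((2:ℝ)^m / Real.sqrt π) ^ (2:ℕ) = 4^m / π := by
    rw [div_pow, Real.sq_sqrt Real.pi_pos.le, ← pow_mul, mul_comm m 2, pow_mul]
    norm_num
  have h4m : (4:ℝ)^m * 4^b = 4^a := by rw [← pow_add, hm]
  unfold clm
  rw [habs, hL1, hL2, hsub, hadd, Gamma_half a, Real.Gamma_nat_eq_factorial b]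
  rw [div_pow, mul_pow, mul_pow, mul_pow, hrpow, Real.sq_sqrt hY, ht]
  unfold fS
  have hfa : ((Nat.factorial a : ℝ)) ≠ 0 := by positivity
  have hfb : ((Nat.factorial b : ℝ)) ≠ 0 := by positivity
  have hf2a : ((Nat.factorial (2*a) : ℝ)) ≠ 0 := by positivity
  have hf2b : ((Nat.factorial (2*b) : ℝ)) ≠ 0 := by positivity
  have h4a : ((4:ℝ))^a ≠ 0 := by positivity
  have h4b : ((4:ℝ))^b ≠ 0 := by positivity
  have h4m' : ((4:ℝ))^m ≠ 0 := by positivity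
  have hpi : π ≠ 0 := Real.pi_ne_zero
  have hsp : Real.sqrt π ≠ 0 := by positivity
  rw [div_pow, mul_pow, Real.sq_sqrt Real.pi_pos.le,
    show (4:ℝ)^m = 4^a / 4^b from by field_simp [← h4m]; exact h4m]
  field_simp

lemma aux1 (t : ℝ) : 2*(t/(4*π))*(1/(2*Real.sqrt π))*(1/(2*Real.sqrt π)) = t/(8*π^2) := by
  have hπ := Real.pi_pos
  have hsπ : Real.sqrt π ≠ 0 := by positivity
  field_simp
  ring_nf
  rw [Real.sq_sqrt Real.pi_pos.le]
lemma aux2 (t : ℝ) : 3*(t/(4*π))*(2/Real.sqrt π)*(2/Real.sqrt π) = 3*t/(π^2) := by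
  have hπ := Real.pi_pos
  have hsπ : Real.sqrt π ≠ 0 := by positivity
  field_simp
  ring_nf
  rw [Real.sq_sqrt Real.pi_pos.le]

lemma clm_bounds (N : ℕ) (hN1 : 1 ≤ N)
    (hf : ∀ n, N ≤ n → 1/(2*Real.sqrt π) ≤ fS n * Real.sqrt n ∧ fS n * Real.sqrt n ≤ 2/Real.sqrt π)
    (ℓ m a b : ℕ) (hl : ℓ = a + b) (hm : m + b = a) (ha : N ≤ a) (hb : N ≤ b) :
    1/(4*π^2) * (ℓ:ℝ) ≤ clm ℓ m ^ 2 ∧ clm ℓ m ^ 2 ≤ 9/π^2 * (ℓ:ℝ) := by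
  have hπ : (0:ℝ) < π := Real.pi_pos
  have hsπ : (0:ℝ) < Real.sqrt π := Real.sqrt_pos.mpr hπ
  have ha1 : (1:ℝ) ≤ (a:ℝ) := by exact_mod_cast le_trans hN1 ha
  have hb1 : (1:ℝ) ≤ (b:ℝ) := by exact_mod_cast le_trans hN1 hb
  have hba : (b:ℝ) ≤ (a:ℝ) := by
    have : b ≤ a := by omega
    exact_mod_cast this
  have hlr : (ℓ:ℝ) = (a:ℝ) + (b:ℝ) := by rw [hl]; push_cast; ring
  have hl1 : (1:ℝ) ≤ (ℓ:ℝ) := by rw [hlr]; linarith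
  have hsa : (0:ℝ) < Real.sqrt a := Real.sqrt_pos.mpr (by linarith)
  have hsb : (0:ℝ) < Real.sqrt b := Real.sqrt_pos.mpr (by linarith)
  have hsa2 : Real.sqrt a ^ 2 = (a:ℝ) := Real.sq_sqrt (by linarith)
  have hsb2 : Real.sqrt b ^ 2 = (b:ℝ) := Real.sq_sqrt (by linarith)
  set X : ℝ := 4*(a:ℝ)*(b:ℝ) + (ℓ:ℝ) + 1/2 with hXdef
  have hX : 0 < X := by rw [hXdef]; positivity
  set S : ℝ := Real.sqrt X with hSdef
  have hS : 0 < S := Real.sqrt_pos.mpr hX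
  set sa : ℝ := Real.sqrt a with hsadef
  set sb : ℝ := Real.sqrt b with hsbdef
  have key : clm ℓ m ^ 2 = (S / (sa * sb)) * ((2*(ℓ:ℝ)+1)/(4*π)) *
      (fS a * sa) * (fS b * sb) := by
    rw [clm_sq ℓ m a b hl hm, ← hXdef, ← hSdef]
    field_simp
  have hab1 : (1:ℝ) ≤ (a:ℝ)*(b:ℝ) := by nlinarith
  have hQl : 2 * (sa * sb) ≤ S := by
    have h1 : (2 * (sa * sb))^2 ≤ X := by
      rw [mul_pow, mul_pow, hsa2, hsb2]; rw [hXdef]; nlinarith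
    calc 2 * (sa * sb) = Real.sqrt ((2 * (sa * sb))^2) :=
          (Real.sqrt_sq (by positivity)).symm
      _ ≤ S := Real.sqrt_le_sqrt h1
  have hQu : S ≤ 3 * (sa * sb) := by
    have h1 : X ≤ (3 * (sa * sb))^2 := by
      rw [mul_pow, mul_pow, hsa2, hsb2, hXdef]; nlinarith
    calc S ≤ Real.sqrt ((3 * (sa * sb))^2) := Real.sqrt_le_sqrt h1
      _ = 3 * (sa * sb) := Real.sqrt_sq (by positivity)
  have hRl : 2 ≤ S / (sa * sb) := (le_div_iff₀ (by positivity)).mpr (by linarith)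
  have hRu : S / (sa * sb) ≤ 3 := (div_le_iff₀ (by positivity)).mpr (by linarith)
  have hfa := hf a ha
  have hfb := hf b hb
  have hππ : Real.sqrt π * Real.sqrt π = π := Real.mul_self_sqrt hπ.le
  have hA : (0:ℝ) ≤ (2*(ℓ:ℝ)+1)/(4*π) := by positivity
  have hfa0 : (0:ℝ) ≤ fS a * sa := mul_nonneg (fS_pos a).le (Real.sqrt_nonneg _)
  have hfb0 : (0:ℝ) ≤ fS b * sb := mul_nonneg (fS_pos b).le (Real.sqrt_nonneg _)
  have hR0 : (0:ℝ) ≤ S / (sa * sb) := by positivity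
  constructor
  · have step : 2 * ((2*(ℓ:ℝ)+1)/(4*π)) * (1/(2*Real.sqrt π)) * (1/(2*Real.sqrt π)) ≤ clm ℓ m ^2 := by
      rw [key]
      refine mul_le_mul (mul_le_mul (mul_le_mul_of_nonneg_right hRl hA) hfa.1
        (by positivity) (mul_nonneg hR0 hA)) hfb.1 (by positivity)
        (mul_nonneg (mul_nonneg hR0 hA) hfa0)
    refine le_trans ?_ step
    rw [aux1 (2*(ℓ:ℝ)+1), show 1/(4*π^2) * (ℓ:ℝ) = (ℓ:ℝ)/(4*π^2) by ring,
      div_le_div_iff₀ (by positivity) (by positivity)]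
    nlinarith [hπ, hl1]
  · have step : clm ℓ m ^2 ≤ 3 * ((2*(ℓ:ℝ)+1)/(4*π)) * (2/Real.sqrt π) * (2/Real.sqrt π) := by
      rw [key]
      refine mul_le_mul (mul_le_mul (mul_le_mul_of_nonneg_right hRu hA) hfa.2
        hfa0 (by positivity)) hfb.2 hfb0 (by positivity)
    refine le_trans step ?_
    rw [aux2 (2*(ℓ:ℝ)+1), show (9:ℝ)/π^2 * (ℓ:ℝ) = 9*(ℓ:ℝ)/(π^2) by ring,
      div_le_div_iff₀ (by positivity) (by positivity)]
    nlinarith [hπ, hl1]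

theorem stmt_13 (r : ℕ → ℝ) (hrpos : ∀ ℓ, 0 < r ℓ)
    (hrinf : Tendsto r atTop atTop)
    (hr0 : Tendsto (fun ℓ : ℕ => r ℓ / (ℓ : ℝ)) atTop (nhds 0)) :
    ∃ C > (0:ℝ), ∃ L : ℕ, 1 ≤ L ∧ ∀ ℓ : ℕ, L ≤ ℓ → ∀ m : ℕ, m ≤ ℓ →
      Even (ℓ + m) →
      (((ℓ : ℝ) - 2 * r ℓ ≤ (m : ℝ) ∧ (m : ℝ) ≤ (ℓ : ℝ) - r ℓ) ∨
        (r ℓ ≤ (m : ℝ) ∧ (m : ℝ) ≤ 2 * r ℓ)) →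
      C * (ℓ : ℝ) ≤ clm ℓ m ^ 2 ∧ clm ℓ m ^ 2 ≤ C⁻¹ * (ℓ : ℝ) := by
  have hπ := Real.pi_pos
  obtain ⟨N, hN1, hf⟩ := exists_fS_bounds
  set C : ℝ := min (1/(4*π^2)) (π^2/9) with hCdef
  have hC : 0 < C := by rw [hCdef]; positivity
  refine ⟨C, hC, ?_⟩
  obtain ⟨L₁, hL₁⟩ := eventually_atTop.mp (hrinf.eventually_ge_atTop ((2*N+2 : ℕ) : ℝ))
  obtain ⟨L₂, hL₂⟩ := eventually_atTop.mp
    (hr0.eventually (eventually_lt_nhds (by norm_num : (0:ℝ) < 1/8)))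
  refine ⟨max (max L₁ L₂) (8*N+8), by omega, ?_⟩
  intro ℓ hL m hm heven hreg
  have hℓL₁ : L₁ ≤ ℓ := by omega
  have hℓL₂ : L₂ ≤ ℓ := by omega
  have hℓN : 8*N+8 ≤ ℓ := by omega
  have hℓpos : (0:ℝ) < ℓ := by
    have : (1:ℕ) ≤ ℓ := by omega
    exact_mod_cast Nat.lt_of_lt_of_le Nat.zero_lt_one this
  have hrN : ((2*N+2 : ℕ) : ℝ) ≤ r ℓ := hL₁ ℓ hℓL₁
  have hrN' : 2*(N:ℝ)+2 ≤ r ℓ := by push_cast at hrN; linarith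
  have hr8 : r ℓ < 1/8 * (ℓ:ℝ) := by
    have := hL₂ ℓ hℓL₂
    rwa [div_lt_iff₀ hℓpos] at this
  -- construct a, b
  have hev2 : Even (ℓ - m) := (Nat.even_sub hm).mpr (Nat.even_add.mp heven)
  obtain ⟨b, hb⟩ := hev2
  set a : ℕ := m + b with hadef
  have hl : ℓ = a + b := by omega
  have hma : m + b = a := rfl
  have hbr : 2*(b:ℝ) = (ℓ:ℝ) - (m:ℝ) := by
    have : m + (b + b) = ℓ := by omega
    have := congrArg (Nat.cast (R := ℝ)) this
    push_cast at this; linarith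
  have har : (a:ℝ) = (m:ℝ) + (b:ℝ) := by rw [hadef]; push_cast; ring
  have hmr : (m:ℝ) ≤ (ℓ:ℝ) := by exact_mod_cast hm
  have hNℓ : 8*(N:ℝ) + 8 ≤ (ℓ:ℝ) := by exact_mod_cast hℓN
  -- show N ≤ a and N ≤ b in both regimes
  have hab : N ≤ a ∧ N ≤ b := by
    rcases hreg with ⟨h1, h2⟩ | ⟨h1, h2⟩
    · -- ℓ - 2r ≤ m ≤ ℓ - r : r ≤ 2b ≤ 2r
      have hb1 : r ℓ ≤ 2*(b:ℝ) := by rw [hbr]; linarith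
      have hb2 : 2*(b:ℝ) ≤ 2 * r ℓ := by rw [hbr]; linarith
      have hbN : (N:ℝ) ≤ (b:ℝ) := by linarith
      have haN : (N:ℝ) ≤ (a:ℝ) := by
        rw [har]; nlinarith
      exact ⟨by exact_mod_cast haN, by exact_mod_cast hbN⟩
    · -- r ≤ m ≤ 2r
      have hb1 : (ℓ:ℝ) - 2 * r ℓ ≤ 2*(b:ℝ) := by rw [hbr]; linarith
      have hbN : (N:ℝ) ≤ (b:ℝ) := by nlinarith
      have haN : (N:ℝ) ≤ (a:ℝ) := by rw [har]; nlinarith [hrpos ℓ, (Nat.cast_nonneg m : (0:ℝ) ≤ m)]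
      exact ⟨by exact_mod_cast haN, by exact_mod_cast hbN⟩
  obtain ⟨hlo, hhi⟩ := clm_bounds N hN1 hf ℓ m a b hl hma hab.1 hab.2
  constructor
  · refine le_trans ?_ hlo
    exact mul_le_mul_of_nonneg_right (min_le_left _ _) hℓpos.le
  · refine le_trans hhi ?_
    have h1 : C ≤ π^2/9 := min_le_right _ _
    have h2 : (π^2/9)⁻¹ ≤ C⁻¹ := by
      apply inv_anti₀ hC h1
    have h3 : (π^2/9)⁻¹ = 9/π^2 := by rw [inv_div]
    exact mul_le_mul_of_nonneg_right (by rw [← h3]; exact h2) hℓpos.le
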